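/- arXiv:hep-th/9812150 — 2 statements merged into one kernel-verified Lean document; each statement's English description precedes it below -/
import Mathlib

section
/- Let f be holomorphic in the open square Δ_b = {η ∈ ℂ : |Re η| < b, |Im η| < b} and continuous on its closure, and suppose that |f(η)| ≤ M·|Im η|^{-n} for all η in the closed square, where n > 0 and M are constants. Then for every real β with -b ≤ β ≤ b one has |f(iβ)| ≤ 5^{n/2} · M · b^{-n}. -/
open Set Complex

theorem stmt_0 (b n M : ℝ) (hb : 0 < b) (hn : 0 < n) (hM : 0 ≤ M) (f : ℂ → ℂ)
    (hf : DifferentiableOn ℂ f {η : ℂ | |η.re| < b ∧ |η.im| < b})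
    (hc : ContinuousOn f {η : ℂ | |η.re| ≤ b ∧ |η.im| ≤ b})
    (hbound : ∀ η : ℂ, |η.re| ≤ b → |η.im| ≤ b → ‖f η‖ * |η.im| ^ n ≤ M) :
    ∀ β : ℝ, -b ≤ β → β ≤ b →
      ‖f (Complex.I * β)‖ ≤ (5 : ℝ) ^ (n / 2) * M * b ^ (-n) := by
  intro β hβ1 hβ2
  have hbne : (-b : ℝ) ≠ b := by linarith
  set S : Set ℂ := Ioo (-b) b ×ℂ Ioo (-b) b with hS
  have hSeq : S = {η : ℂ | |η.re| < b ∧ |η.im| < b} := by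
    ext z; simp [hS, Complex.mem_reProdIm, abs_lt]
  have hSopen : IsOpen S := isOpen_Ioo.reProdIm isOpen_Ioo
  have hclosure : closure S = Icc (-b) b ×ℂ Icc (-b) b := by
    rw [hS, Complex.closure_reProdIm, closure_Ioo hbne]
  have hclsub : ∀ z ∈ closure S, |z.re| ≤ b ∧ |z.im| ≤ b := by
    intro z hz
    rw [hclosure, Complex.mem_reProdIm, mem_Icc, mem_Icc] at hz
    exact ⟨abs_le.2 hz.1, abs_le.2 hz.2⟩
  have hre : ∀ z : ℂ, ((b:ℂ)^2 - z^2).re = b^2 - z.re^2 + z.im^2 := by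
    intro z; simp [pow_two, Complex.mul_re]; ring
  have him : ∀ z : ℂ, ((b:ℂ)^2 - z^2).im = -(2 * z.re * z.im) := by
    intro z; simp [pow_two, Complex.mul_im]; ring
  set g : ℂ → ℂ := fun η => ((b:ℂ)^2 - η^2) ^ (n:ℂ) * f η with hg
  have habs : ∀ z : ℂ, ‖g z‖ = ‖(b:ℂ)^2 - z^2‖ ^ n * ‖f z‖ := by
    intro z
    simp [hg, Complex.norm_cpow_real]
  have hgdc : DiffContOnCl ℂ g S := by
    constructor
    · apply DifferentiableOn.mul _ (hf.mono (le_of_eq hSeq))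
      intro z hz
      refine (DifferentiableAt.cpow (by fun_prop) (differentiableAt_const _)
        ?_).differentiableWithinAt
      rw [hSeq] at hz
      refine Complex.mem_slitPlane_iff.2 (Or.inl ?_)
      rw [hre]
      nlinarith [abs_lt.1 hz.1, sq_nonneg z.im, _root_.sq_abs z.re]
    · apply ContinuousOn.mul _ (hc.mono (fun z hz => hclsub z hz))
      intro z hz
      refine (ContinuousAt.comp (Complex.continuousAt_cpow_const_of_re_pos ?_ ?_)
        (by fun_prop)).continuousWithinAt
      · left
        rw [hre]
        have h1 := abs_le.1 (hclsub z hz).1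
        nlinarith [sq_nonneg z.im, _root_.sq_abs z.re]
      · simpa using hn
  set C : ℝ := Real.sqrt 5 ^ n * b ^ n * M with hC
  have hbn : (0:ℝ) < b ^ n := Real.rpow_pos_of_pos hb n
  have hs5 : (0:ℝ) ≤ Real.sqrt 5 := Real.sqrt_nonneg 5
  have hs5n : (0:ℝ) ≤ Real.sqrt 5 ^ n := Real.rpow_nonneg hs5 n
  -- frontier bound
  have hfr : ∀ z ∈ frontier S, ‖g z‖ ≤ C := by
    intro z hz
    have hzcl : z ∈ closure S := frontier_subset_closure hz
    have hznS : z ∉ S := by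
      rw [hSopen.frontier_eq] at hz; exact hz.2
    obtain ⟨hxb, hyb⟩ := hclsub z hzcl
    have hy2 : z.im ^ 2 ≤ b ^ 2 := by nlinarith [abs_le.1 hyb, _root_.sq_abs z.im]
    have hx2 : z.re ^ 2 ≤ b ^ 2 := by nlinarith [abs_le.1 hxb, _root_.sq_abs z.re]
    set A : ℝ := ‖(b:ℂ)^2 - z^2‖ with hA
    have hA0 : 0 ≤ A := norm_nonneg _
    have hA2 : A ^ 2 = (b^2 - z.re^2 + z.im^2)^2 + (2 * z.re * z.im)^2 := by
      rw [hA, Complex.sq_norm, Complex.normSq_apply, hre, him]; ring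
    have hcase : |z.re| = b ∨ |z.im| = b := by
      rw [hSeq] at hznS
      simp only [mem_setOf_eq, not_and_or, not_lt] at hznS
      rcases hznS with h | h
      · exact Or.inl (le_antisymm hxb h)
      · exact Or.inr (le_antisymm hyb h)
    rcases hcase with hcx | hcy
    · -- |re z| = b
      have hx2' : z.re ^ 2 = b ^ 2 := by rw [← _root_.sq_abs z.re, hcx]
      have hAle : A ≤ Real.sqrt 5 * (b * |z.im|) := by
        have hrhs : (0:ℝ) ≤ Real.sqrt 5 * (b * |z.im|) := by positivity
        refine (pow_le_pow_iff_left₀ hA0 hrhs two_ne_zero).1 ?_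
        have hR : (Real.sqrt 5 * (b * |z.im|)) ^ 2 = 5 * (b ^ 2 * z.im ^ 2) := by
          rw [mul_pow, mul_pow, Real.sq_sqrt (by norm_num : (0:ℝ) ≤ 5), _root_.sq_abs]
        rw [hA2, hR]
        nlinarith [sq_nonneg z.im]
      have hAn : A ^ n ≤ Real.sqrt 5 ^ n * (b ^ n * |z.im| ^ n) := by
        calc A ^ n ≤ (Real.sqrt 5 * (b * |z.im|)) ^ n :=
              Real.rpow_le_rpow hA0 hAle hn.le
          _ = Real.sqrt 5 ^ n * (b ^ n * |z.im| ^ n) := by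
              rw [Real.mul_rpow hs5 (by positivity), Real.mul_rpow hb.le (abs_nonneg _)]
      calc ‖g z‖ = A ^ n * ‖f z‖ := habs z
        _ ≤ (Real.sqrt 5 ^ n * (b ^ n * |z.im| ^ n)) * ‖f z‖ :=
            mul_le_mul_of_nonneg_right hAn (norm_nonneg _)
        _ = (Real.sqrt 5 ^ n * b ^ n) * (‖f z‖ * |z.im| ^ n) := by ring
        _ ≤ (Real.sqrt 5 ^ n * b ^ n) * M :=
            mul_le_mul_of_nonneg_left (hbound z hxb hyb) (by positivity)
        _ = C := by rw [hC]
    · -- |im z| = b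
      have hy2' : z.im ^ 2 = b ^ 2 := by rw [← _root_.sq_abs z.im, hcy]
      have hAle : A ≤ Real.sqrt 5 * (b * b) := by
        have hrhs : (0:ℝ) ≤ Real.sqrt 5 * (b * b) := by positivity
        refine (pow_le_pow_iff_left₀ hA0 hrhs two_ne_zero).1 ?_
        have hR : (Real.sqrt 5 * (b * b)) ^ 2 = 5 * (b ^ 2 * b ^ 2) := by
          rw [mul_pow, mul_pow, Real.sq_sqrt (by norm_num : (0:ℝ) ≤ 5)]
        rw [hA2, hR]
        nlinarith [sq_nonneg z.re, sq_nonneg (z.re ^ 2 - b ^ 2)]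
      have hAn : A ^ n ≤ Real.sqrt 5 ^ n * (b ^ n * b ^ n) := by
        calc A ^ n ≤ (Real.sqrt 5 * (b * b)) ^ n := Real.rpow_le_rpow hA0 hAle hn.le
          _ = Real.sqrt 5 ^ n * (b ^ n * b ^ n) := by
              rw [Real.mul_rpow hs5 (by positivity), Real.mul_rpow hb.le hb.le]
      have hfb : ‖f z‖ * b ^ n ≤ M := by
        have := hbound z hxb hyb
        rwa [hcy] at this
      calc ‖g z‖ = A ^ n * ‖f z‖ := habs z
        _ ≤ (Real.sqrt 5 ^ n * (b ^ n * b ^ n)) * ‖f z‖ :=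
            mul_le_mul_of_nonneg_right hAn (norm_nonneg _)
        _ = (Real.sqrt 5 ^ n * b ^ n) * (‖f z‖ * b ^ n) := by ring
        _ ≤ (Real.sqrt 5 ^ n * b ^ n) * M :=
            mul_le_mul_of_nonneg_left hfb (by positivity)
        _ = C := by rw [hC]
  -- boundedness
  have hbd : Bornology.IsBounded S := by
    refine (Metric.isBounded_closedBall (x := (0:ℂ)) (r := 2*b)).subset ?_
    intro z hz
    rw [hSeq] at hz
    rw [Metric.mem_closedBall, dist_zero_right]
    calc ‖z‖ ≤ |z.re| + |z.im| := Complex.norm_le_abs_re_add_abs_im z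
      _ ≤ 2 * b := by linarith [hz.1.le, hz.2.le]
  -- membership of I*β in closure
  have hmem : (Complex.I * (β:ℂ)) ∈ closure S := by
    have h1 : (Complex.I * (β:ℂ)).re = 0 := by simp
    have h2 : (Complex.I * (β:ℂ)).im = β := by simp
    rw [hclosure, Complex.mem_reProdIm, h1, h2]
    exact ⟨mem_Icc.2 ⟨by linarith, hb.le⟩, mem_Icc.2 ⟨hβ1, hβ2⟩⟩
  have hgb : ‖g (Complex.I * β)‖ ≤ C :=
    Complex.norm_le_of_forall_mem_frontier_norm_le hbd hgdc hfr hmem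
  -- compute ‖g (I β)‖
  have hbase : ((b:ℂ)^2 - (Complex.I * (β:ℂ))^2) = ((b^2 + β^2 : ℝ) : ℂ) := by
    push_cast
    rw [mul_pow, Complex.I_sq]
    ring
  have hgv : ‖f (Complex.I * β)‖ * (b^2 + β^2) ^ n ≤ C := by
    have h1 := habs (Complex.I * (β:ℂ))
    rw [hbase, Complex.norm_real, Real.norm_eq_abs,
      _root_.abs_of_nonneg (show (0:ℝ) ≤ b ^ 2 + β ^ 2 by positivity)] at h1
    rw [h1, mul_comm] at hgb
    exact hgb
  have hmono : b ^ n * b ^ n ≤ (b^2 + β^2) ^ n := by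
    calc b ^ n * b ^ n = (b * b) ^ n := (Real.mul_rpow hb.le hb.le).symm
      _ ≤ (b^2 + β^2) ^ n := by
          apply Real.rpow_le_rpow (by positivity) (by nlinarith [sq_nonneg β]) hn.le
  have hkey : ‖f (Complex.I * β)‖ * (b ^ n * b ^ n) ≤ C :=
    le_trans (mul_le_mul_of_nonneg_left hmono (norm_nonneg _)) hgv
  have h5 : (5:ℝ) ^ (n/2) = Real.sqrt 5 ^ n := by
    rw [Real.sqrt_eq_rpow, ← Real.rpow_mul (by norm_num : (0:ℝ) ≤ 5)]
    congr 1
    ring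
  have hbneg : b ^ (-n) = (b ^ n)⁻¹ := Real.rpow_neg hb.le n
  rw [h5, hbneg]
  rw [← le_div_iff₀ (by positivity)] at hkey
  refine hkey.trans (le_of_eq ?_)
  rw [hC]
  field_simp
end

section
/- Let f be holomorphic in a neighbourhood of 0 in ℂ and on a star-shaped domain U, let α > 0 and n a positive integer, and let D_n denote n-fold differentiation and P_α the Riemann–Liouville primitive of order α based at 0. Then on U minus a cut where θ^{α-n} is defined: (D_n P_α f)(θ) - (P_α D_n f)(θ) = Σ_{p=0}^{n-1} (D_p f)(0) · θ^{α-n+p} / Γ(α-n+p+1). -/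
/-- Riemann–Liouville primitive of order `α` in the complex domain, taken along the
segment `[0, θ]`. -/
noncomputable def Pfrac (α : ℝ) (f : ℂ → ℂ) (θ : ℂ) : ℂ :=
  (Complex.Gamma (α : ℂ))⁻¹ * θ ^ (α : ℂ) *
    ∫ t in (0:ℝ)..1, (((1 - t) ^ (α - 1) : ℝ) : ℂ) * f (t • θ)

open Complex MeasureTheory Set Metric Finset intervalIntegral Filter Topology

section helpers

variable {U : Set ℂ}

lemma kernel_ii {β : ℝ} (hβ : 0 < β) :
    IntervalIntegrable (fun t : ℝ => (((1 - t) ^ (β - 1) : ℝ) : ℂ)) volume 0 1 := by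
  have h1 : IntervalIntegrable (fun t : ℝ => (1 - t) ^ (β - 1)) volume 0 1 := by
    have := (intervalIntegrable_rpow' (a := 0) (b := 1) (by linarith : (-1:ℝ) < β - 1)).comp_sub_left 1
    simpa using this.symm
  rw [intervalIntegrable_iff] at h1 ⊢
  exact h1.ofReal

lemma cont_pow {β : ℝ} (hβ : 0 < β) : Continuous fun t : ℝ => ((1 - t) ^ β : ℝ) :=
  (Real.continuous_rpow_const hβ.le).comp (continuous_const.sub continuous_id)

lemma cont_seg {g : ℂ → ℂ} (hg : ContinuousOn g U) (hstar : StarConvex ℝ 0 U) {θ : ℂ}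
    (hθ : θ ∈ U) : ContinuousOn (fun t : ℝ => g (t • θ)) (Icc 0 1) :=
  hg.comp ((continuous_id.smul continuous_const).continuousOn)
    (fun t ht => hstar.smul_mem hθ ht.1 ht.2)

lemma derivOn (hU : IsOpen U) {g : ℂ → ℂ} (hg : DifferentiableOn ℂ g U) :
    DifferentiableOn ℂ (deriv g) U :=
  ((hg.analyticOnNhd hU).deriv).differentiableOn

lemma iter_derivOn (hU : IsOpen U) {g : ℂ → ℂ} (hg : DifferentiableOn ℂ g U) (k : ℕ) :
    DifferentiableOn ℂ (iteratedDeriv k g) U := by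
  induction k with
  | zero => simpa using hg
  | succ k ih => rw [iteratedDeriv_succ]; exact derivOn hU ih

lemma hasDerivAt_seg {g : ℂ → ℂ} {θ : ℂ} {t : ℝ} (hg : DifferentiableAt ℂ g (t • θ)) :
    HasDerivAt (fun s : ℝ => g (s • θ)) (θ * deriv g (t • θ)) t := by
  have h1 : HasDerivAt (fun z : ℂ => g (z * θ)) (deriv g ((t : ℂ) * θ) * θ) (t : ℂ) := by
    have hinner : HasDerivAt (fun z : ℂ => z * θ) θ (t : ℂ) := hasDerivAt_mul_const θ
    have := (hg.hasDerivAt.comp (t : ℂ) (by simpa [Complex.real_smul] using hinner))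
    simpa [Complex.real_smul, Function.comp_def] using this
  have := h1.comp_ofReal
  simpa [Complex.real_smul, mul_comm] using this

lemma hasDerivAt_kernel {β : ℝ} {t : ℝ} (ht : t < 1) :
    HasDerivAt (fun s : ℝ => (((1 - s) ^ β : ℝ) : ℂ)) (-(β * (1 - t) ^ (β - 1)) : ℝ) t := by
  have h1 : HasDerivAt (fun s : ℝ => ((1 - s) ^ β : ℝ)) (-(β * (1 - t) ^ (β - 1))) t := by
    have houter : HasDerivAt (fun x : ℝ => x ^ β) (β * (1 - t) ^ (β - 1)) (1 - t) :=
      Real.hasDerivAt_rpow_const (Or.inl (by linarith))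
    have hinner : HasDerivAt (fun s : ℝ => 1 - s) (-1) t := by
      simpa using (hasDerivAt_id t).const_sub 1
    simpa [mul_comm, Function.comp_def] using houter.comp t hinner
  exact h1.ofReal_comp

end helpers

lemma Gamma_real_ne_zero {x : ℝ} (hx : 0 < x) : Complex.Gamma (x : ℂ) ≠ 0 := by
  rw [Complex.Gamma_ofReal]
  exact_mod_cast (Real.Gamma_pos_of_pos hx).ne'

lemma stepdown {U : Set ℂ} (hU : IsOpen U) (hstar : StarConvex ℝ 0 U) {g : ℂ → ℂ}
    (hg : DifferentiableOn ℂ g U) {α : ℝ} (hα : 0 < α) {θ : ℂ} (hθ : θ ∈ U) :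
    Pfrac α g θ = g 0 * θ ^ (α : ℂ) / Complex.Gamma ((α : ℂ) + 1)
      + Pfrac (α + 1) (deriv g) θ := by
  have hαC : ((α : ℂ)) ≠ 0 := by exact_mod_cast hα.ne'
  rcases eq_or_ne θ 0 with rfl | hθ0
  · have h1 : (0 : ℂ) ^ (α : ℂ) = 0 := Complex.zero_cpow hαC
    have h2 : (0 : ℂ) ^ (((α + 1 : ℝ)) : ℂ) = 0 :=
      Complex.zero_cpow (by exact_mod_cast (by linarith : α + 1 ≠ 0))
    simp only [Pfrac, h1, h2, mul_zero, zero_mul, add_zero, zero_div, zero_add]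
  have hg' := derivOn hU hg
  set u : ℝ → ℂ := fun t => g (t • θ) with hu
  set v : ℝ → ℂ := fun t => deriv g (t • θ) with hv
  have hucont : ContinuousOn u (Icc 0 1) := cont_seg (hg.continuousOn) hstar hθ
  have hvcont : ContinuousOn v (Icc 0 1) := cont_seg (hg'.continuousOn) hstar hθ
  -- integrabilities
  have int1 : IntervalIntegrable (fun t => (((1 - t) ^ (α - 1) : ℝ) : ℂ) * u t) volume 0 1 :=
    (kernel_ii hα).mul_continuousOn (by rwa [Set.uIcc_of_le zero_le_one])
  have int2 : IntervalIntegrable (fun t => (((1 - t) ^ α : ℝ) : ℂ) / (α : ℂ) * (θ * v t))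
      volume 0 1 := by
    apply ContinuousOn.intervalIntegrable
    rw [Set.uIcc_of_le zero_le_one]
    exact ((((Complex.continuous_ofReal.comp (cont_pow hα)).continuousOn).div_const _).mul
      (continuousOn_const.mul hvcont))
  -- FTC
  have key2 := integral_eq_sub_of_hasDeriv_right_of_le (a := (0:ℝ)) (b := 1)
      (f := fun s : ℝ => -(α:ℂ)⁻¹ * ((((1:ℝ) - s) ^ α : ℝ) : ℂ) * u s)
      (f' := fun t => (((1 - t) ^ (α - 1) : ℝ) : ℂ) * u t
        - (((1 - t) ^ α : ℝ) : ℂ) / (α : ℂ) * (θ * v t))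
      zero_le_one
      ((continuousOn_const.mul
        ((Complex.continuous_ofReal.comp (cont_pow hα)).continuousOn)).mul hucont)
      (fun t ht => by
        have hk := hasDerivAt_kernel (β := α) ht.2
        have huD : HasDerivAt u (θ * v t) t :=
          hasDerivAt_seg (hg.differentiableAt (hU.mem_nhds
            (hstar.smul_mem hθ ht.1.le ht.2.le)))
        have hder := (hk.mul huD).const_mul (-(α:ℂ)⁻¹)
        have : HasDerivAt (fun s : ℝ => -(α:ℂ)⁻¹ * ((((1:ℝ) - s) ^ α : ℝ) : ℂ) * u s)
            ((((1 - t) ^ (α - 1) : ℝ) : ℂ) * u t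
              - (((1 - t) ^ α : ℝ) : ℂ) / (α : ℂ) * (θ * v t)) t := by
          convert hder using 1
          · rfl
          · funext s; simp only [Pi.mul_apply]; ring
          · push_cast
            field_simp
            ring
        exact this.hasDerivWithinAt)
      (int1.sub int2)
  have key : (∫ t in (0:ℝ)..1, ((((1 - t) ^ (α - 1) : ℝ) : ℂ) * u t
        - (((1 - t) ^ α : ℝ) : ℂ) / (α : ℂ) * (θ * v t))) = (α:ℂ)⁻¹ * u 0 := by
    rw [key2]
    simp [Real.zero_rpow hα.ne', Real.one_rpow]
  have hsplit : (∫ t in (0:ℝ)..1, (((1 - t) ^ (α - 1) : ℝ) : ℂ) * u t)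
      = (α : ℂ)⁻¹ * u 0
        + (θ / α) * ∫ t in (0:ℝ)..1, (((1 - t) ^ α : ℝ) : ℂ) * v t := by
    have h3 : (∫ t in (0:ℝ)..1, (((1 - t) ^ α : ℝ) : ℂ) / (α : ℂ) * (θ * v t))
        = (θ / α) * ∫ t in (0:ℝ)..1, (((1 - t) ^ α : ℝ) : ℂ) * v t := by
      rw [← intervalIntegral.integral_const_mul]
      apply intervalIntegral.integral_congr
      intro t _
      field_simp
    have h4 := intervalIntegral.integral_sub int1 int2
    rw [key] at h4
    rw [← h3]
    linear_combination -h4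
  -- now assemble
  have hker1 : (fun t : ℝ => (((1 - t) ^ (α + 1 - 1) : ℝ) : ℂ) * v t)
      = fun t : ℝ => (((1 - t) ^ α : ℝ) : ℂ) * v t := by
    funext t; norm_num
  rw [Pfrac, Pfrac, hker1, hsplit]
  have hΓ : Complex.Gamma ((α:ℂ) + 1) = (α:ℂ) * Complex.Gamma (α:ℂ) :=
    Complex.Gamma_add_one _ hαC
  have hΓcast : ((α + 1 : ℝ) : ℂ) = (α:ℂ) + 1 := by push_cast; ring
  have hpow : θ ^ ((α:ℂ) + 1) = θ ^ (α:ℂ) * θ := by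
    rw [Complex.cpow_add _ _ hθ0, Complex.cpow_one]
  rw [hΓcast, hpow, hΓ]
  have hΓ0 : Complex.Gamma (α:ℂ) ≠ 0 := Gamma_real_ne_zero hα
  have hu0 : u 0 = g 0 := by simp [hu]
  rw [hu0]
  field_simp

lemma aux_id {β t : ℝ} (hβ : 0 < β) (ht1 : t ≤ 1) :
    t * (1 - t) ^ (β - 1) = (1 - t) ^ (β - 1) - (1 - t) ^ β := by
  rcases eq_or_lt_of_le ht1 with rfl | hlt
  · simp [Real.zero_rpow hβ.ne']
  · have h1 : (0:ℝ) < 1 - t := by linarith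
    rw [show β = (β - 1) + 1 by ring, Real.rpow_add h1, Real.rpow_one]
    ring

lemma keyC {U : Set ℂ} (hU : IsOpen U) (hstar : StarConvex ℝ 0 U) {g : ℂ → ℂ}
    (hg : DifferentiableOn ℂ g U) {β : ℝ} (hβ : 0 < β) {θ : ℂ} (hθ : θ ∈ U) :
    θ * ∫ t in (0:ℝ)..1, ((t:ℝ):ℂ) * (((1 - t) ^ β : ℝ) : ℂ) * deriv g (t • θ)
      = (β:ℂ) * (∫ t in (0:ℝ)..1, (((1 - t) ^ (β - 1) : ℝ) : ℂ) * g (t • θ))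
        - ((β:ℂ) + 1) * ∫ t in (0:ℝ)..1, (((1 - t) ^ β : ℝ) : ℂ) * g (t • θ) := by
  have hg' := derivOn hU hg
  set u : ℝ → ℂ := fun t => g (t • θ) with hu
  set v : ℝ → ℂ := fun t => deriv g (t • θ) with hv
  have hucont : ContinuousOn u (Icc 0 1) := cont_seg (hg.continuousOn) hstar hθ
  have hvcont : ContinuousOn v (Icc 0 1) := cont_seg (hg'.continuousOn) hstar hθ
  have hkc : Continuous fun t : ℝ => (((1 - t) ^ β : ℝ) : ℂ) :=
    Complex.continuous_ofReal.comp (cont_pow hβ)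
  have int1 : IntervalIntegrable (fun t => (((1 - t) ^ β : ℝ) : ℂ) * u t) volume 0 1 := by
    apply ContinuousOn.intervalIntegrable
    rw [Set.uIcc_of_le zero_le_one]
    exact hkc.continuousOn.mul hucont
  have int2 : IntervalIntegrable
      (fun t => (((1 - t) ^ (β - 1) : ℝ) : ℂ) * (-(β:ℂ) * ((t:ℝ):ℂ) * u t)) volume 0 1 := by
    apply (kernel_ii hβ).mul_continuousOn
    rw [Set.uIcc_of_le zero_le_one]
    exact (continuousOn_const.mul (Complex.continuous_ofReal.continuousOn)).mul hucont
  have int2' : IntervalIntegrable (fun t => (((1 - t) ^ (β - 1) : ℝ) : ℂ) * u t) volume 0 1 :=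
    (kernel_ii hβ).mul_continuousOn (by rw [Set.uIcc_of_le zero_le_one]; exact hucont)
  have int3 : IntervalIntegrable
      (fun t => ((t:ℝ):ℂ) * (((1 - t) ^ β : ℝ) : ℂ) * (θ * v t)) volume 0 1 := by
    apply ContinuousOn.intervalIntegrable
    rw [Set.uIcc_of_le zero_le_one]
    exact ((Complex.continuous_ofReal.continuousOn.mul hkc.continuousOn)).mul
      (continuousOn_const.mul hvcont)
  have key2 := integral_eq_sub_of_hasDeriv_right_of_le (a := (0:ℝ)) (b := 1)
      (f := fun s : ℝ => ((s:ℝ):ℂ) * ((((1:ℝ) - s) ^ β : ℝ) : ℂ) * u s)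
      (f' := fun t => (((1 - t) ^ β : ℝ) : ℂ) * u t
        + (((1 - t) ^ (β - 1) : ℝ) : ℂ) * (-(β:ℂ) * ((t:ℝ):ℂ) * u t)
        + ((t:ℝ):ℂ) * (((1 - t) ^ β : ℝ) : ℂ) * (θ * v t))
      zero_le_one
      ((Complex.continuous_ofReal.continuousOn.mul hkc.continuousOn).mul hucont)
      (fun t ht => by
        have hk := hasDerivAt_kernel (β := β) ht.2
        have huD : HasDerivAt u (θ * v t) t :=
          hasDerivAt_seg (hg.differentiableAt (hU.mem_nhds
            (hstar.smul_mem hθ ht.1.le ht.2.le)))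
        have hT : HasDerivAt (fun s : ℝ => ((s:ℝ):ℂ)) 1 t := by
          simpa using (hasDerivAt_id t).ofReal_comp
        have hder := (hT.mul hk).mul huD
        have : HasDerivAt (fun s : ℝ => ((s:ℝ):ℂ) * ((((1:ℝ) - s) ^ β : ℝ) : ℂ) * u s)
            ((((1 - t) ^ β : ℝ) : ℂ) * u t
              + (((1 - t) ^ (β - 1) : ℝ) : ℂ) * (-(β:ℂ) * ((t:ℝ):ℂ) * u t)
              + ((t:ℝ):ℂ) * (((1 - t) ^ β : ℝ) : ℂ) * (θ * v t)) t := by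
          refine hder.congr_deriv ?_
          simp only [Pi.mul_apply]
          push_cast
          ring
        exact this.hasDerivWithinAt)
      ((int1.add int2).add int3)
  have hH : (∫ t in (0:ℝ)..1, ((((1 - t) ^ β : ℝ) : ℂ) * u t
        + (((1 - t) ^ (β - 1) : ℝ) : ℂ) * (-(β:ℂ) * ((t:ℝ):ℂ) * u t)
        + ((t:ℝ):ℂ) * (((1 - t) ^ β : ℝ) : ℂ) * (θ * v t))) = 0 := by
    rw [key2]
    simp [Real.zero_rpow hβ.ne']
  rw [intervalIntegral.integral_add (int1.add int2) int3,
    intervalIntegral.integral_add int1 int2] at hH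
  -- rewrite the middle integral
  have hmid : (∫ t in (0:ℝ)..1, (((1 - t) ^ (β - 1) : ℝ) : ℂ) * (-(β:ℂ) * ((t:ℝ):ℂ) * u t))
      = -(β:ℂ) * ((∫ t in (0:ℝ)..1, (((1 - t) ^ (β - 1) : ℝ) : ℂ) * u t)
          - ∫ t in (0:ℝ)..1, (((1 - t) ^ β : ℝ) : ℂ) * u t) := by
    rw [← intervalIntegral.integral_sub int2' int1, ← intervalIntegral.integral_const_mul]
    apply intervalIntegral.integral_congr
    intro t ht
    rw [Set.uIcc_of_le zero_le_one] at ht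
    have := aux_id hβ ht.2
    have hC : ((t:ℝ):ℂ) * (((1 - t) ^ (β - 1) : ℝ) : ℂ)
        = (((1 - t) ^ (β - 1) : ℝ) : ℂ) - (((1 - t) ^ β : ℝ) : ℂ) := by
      calc ((t:ℝ):ℂ) * (((1 - t) ^ (β - 1) : ℝ) : ℂ)
          = ((t * (1 - t) ^ (β - 1) : ℝ) : ℂ) := by push_cast; ring
        _ = (((1 - t) ^ (β - 1) - (1 - t) ^ β : ℝ) : ℂ) := by rw [this]
        _ = (((1 - t) ^ (β - 1) : ℝ) : ℂ) - (((1 - t) ^ β : ℝ) : ℂ) := by push_cast; ring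
    calc (((1 - t) ^ (β - 1) : ℝ) : ℂ) * (-(β:ℂ) * ((t:ℝ):ℂ) * u t)
        = -(β:ℂ) * ((((t:ℝ):ℂ) * (((1 - t) ^ (β - 1) : ℝ) : ℂ)) * u t) := by ring
      _ = -(β:ℂ) * (((((1 - t) ^ (β - 1) : ℝ) : ℂ) - (((1 - t) ^ β : ℝ) : ℂ)) * u t) := by
          rw [hC]
      _ = -(β:ℂ) * ((((1 - t) ^ (β - 1) : ℝ) : ℂ) * u t - (((1 - t) ^ β : ℝ) : ℂ) * u t) := by
          ring
  have hlast : (∫ t in (0:ℝ)..1, ((t:ℝ):ℂ) * (((1 - t) ^ β : ℝ) : ℂ) * (θ * v t))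
      = θ * ∫ t in (0:ℝ)..1, ((t:ℝ):ℂ) * (((1 - t) ^ β : ℝ) : ℂ) * v t := by
    rw [← intervalIntegral.integral_const_mul]
    apply intervalIntegral.integral_congr
    intro t _
    ring
  rw [hmid, hlast] at hH
  linear_combination hH

lemma hasDerivAt_Pfrac {U : Set ℂ} (hU : IsOpen U) (hstar : StarConvex ℝ 0 U) {g : ℂ → ℂ}
    (hg : DifferentiableOn ℂ g U) {β : ℝ} (hβ : 0 < β) {θ : ℂ} (hθ : θ ∈ U)
    (hθs : θ ∈ Complex.slitPlane) :
    HasDerivAt (Pfrac (β + 1) g) (Pfrac β g θ) θ := by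
  have hθ0 : θ ≠ 0 := Complex.slitPlane_ne_zero hθs
  have hβC : ((β : ℂ)) ≠ 0 := by exact_mod_cast hβ.ne'
  have hg' := derivOn hU hg
  -- choose ε with closedBall θ ε ⊆ U
  obtain ⟨r, hr, hrU⟩ := Metric.isOpen_iff.mp hU θ hθ
  set ε := r / 2 with hε
  have hεpos : 0 < ε := by positivity
  have hball : closedBall θ ε ⊆ U := fun x hx =>
    hrU (lt_of_le_of_lt (mem_closedBall.mp hx) (by linarith))
  -- compact set and bound
  set K : Set ℂ := (fun p : ℝ × ℂ => p.1 • p.2) '' (Set.Icc (0:ℝ) 1 ×ˢ closedBall θ ε) with hK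
  have hKcomp : IsCompact K :=
    (isCompact_Icc.prod (isCompact_closedBall _ _)).image
      (continuous_fst.smul continuous_snd)
  have hKU : K ⊆ U := by
    rintro z ⟨⟨t, x⟩, ⟨ht, hx⟩, rfl⟩
    exact hstar.smul_mem (hball hx) ht.1 ht.2
  obtain ⟨C, hC⟩ := hKcomp.exists_bound_of_continuousOn (hg'.continuousOn.mono hKU)
  have hθK : θ ∈ K := ⟨(1, θ), ⟨⟨zero_le_one, le_rfl⟩, mem_closedBall_self hεpos.le⟩,
    one_smul ℝ θ⟩
  have hC0 : 0 ≤ C := le_trans (norm_nonneg _) (hC θ hθK)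
  have hkc : Continuous fun t : ℝ => (((1 - t) ^ β : ℝ) : ℂ) :=
    Complex.continuous_ofReal.comp (cont_pow hβ)
  -- dominated differentiation
  have hdd := intervalIntegral.hasDerivAt_integral_of_dominated_loc_of_deriv_le
    (𝕜 := ℂ) (μ := volume) (a := 0) (b := 1) (x₀ := θ)
    (F := fun x t => (((1 - t) ^ β : ℝ) : ℂ) * g (t • x))
    (F' := fun x t => (((1 - t) ^ β : ℝ) : ℂ) * (((t:ℝ):ℂ) * deriv g (t • x)))
    (bound := fun _ => C) (s := ball θ ε) (Metric.ball_mem_nhds θ hεpos)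
    (by
      filter_upwards [Metric.closedBall_mem_nhds θ hεpos] with x hx
      apply ContinuousOn.aestronglyMeasurable _ measurableSet_uIoc
      have : ContinuousOn (fun t : ℝ => (((1 - t) ^ β : ℝ) : ℂ) * g (t • x)) (Icc 0 1) :=
        hkc.continuousOn.mul (cont_seg (hg.continuousOn) hstar (hball hx))
      exact this.mono (by rw [Set.uIoc_of_le zero_le_one]; exact Ioc_subset_Icc_self))
    (by
      apply ContinuousOn.intervalIntegrable
      rw [Set.uIcc_of_le zero_le_one]
      exact hkc.continuousOn.mul (cont_seg (hg.continuousOn) hstar hθ))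
    (by
      apply ContinuousOn.aestronglyMeasurable _ measurableSet_uIoc
      have : ContinuousOn (fun t : ℝ => (((1 - t) ^ β : ℝ) : ℂ)
          * (((t:ℝ):ℂ) * deriv g (t • θ))) (Icc 0 1) :=
        hkc.continuousOn.mul (Complex.continuous_ofReal.continuousOn.mul
          (cont_seg (hg'.continuousOn) hstar hθ))
      exact this.mono (by rw [Set.uIoc_of_le zero_le_one]; exact Ioc_subset_Icc_self))
    (by
      refine Filter.Eventually.of_forall (fun t ht x hx => ?_)
      rw [Set.uIoc_of_le zero_le_one] at ht
      have htx : t • x ∈ K := ⟨(t, x), ⟨⟨ht.1.le, ht.2⟩, ball_subset_closedBall hx⟩, rfl⟩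
      have h1 : ‖(((1 - t) ^ β : ℝ) : ℂ)‖ ≤ 1 := by
        rw [Complex.norm_real, Real.norm_eq_abs, _root_.abs_of_nonneg
          (Real.rpow_nonneg (by linarith [ht.2]) _)]
        exact Real.rpow_le_one (by linarith [ht.2]) (by linarith [ht.1]) hβ.le
      have h2 : ‖((t:ℝ):ℂ)‖ ≤ 1 := by
        rw [Complex.norm_real, Real.norm_eq_abs, _root_.abs_of_nonneg ht.1.le]
        exact ht.2
      calc ‖(((1 - t) ^ β : ℝ) : ℂ) * (((t:ℝ):ℂ) * deriv g (t • x))‖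
          = ‖(((1 - t) ^ β : ℝ) : ℂ)‖ * (‖((t:ℝ):ℂ)‖ * ‖deriv g (t • x)‖) := by
            rw [norm_mul, norm_mul]
        _ ≤ 1 * (1 * C) := by
            apply mul_le_mul h1 _ (by positivity) zero_le_one
            exact mul_le_mul h2 (hC _ htx) (norm_nonneg _) zero_le_one
        _ = C := by ring)
    intervalIntegrable_const
    (by
      refine Filter.Eventually.of_forall (fun t ht x hx => ?_)
      rw [Set.uIoc_of_le zero_le_one] at ht
      have hdiff : DifferentiableAt ℂ g (t • x) :=
        hg.differentiableAt (hU.mem_nhds (hKU ⟨(t, x),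
          ⟨⟨ht.1.le, ht.2⟩, ball_subset_closedBall hx⟩, rfl⟩))
      have hinner : HasDerivAt (fun y : ℂ => (t : ℂ) * y) (t:ℂ) x := by
        simpa using (hasDerivAt_id x).const_mul ((t:ℝ):ℂ)
      have hdiff' : DifferentiableAt ℂ g ((t:ℂ) * x) := by simpa [Complex.real_smul] using hdiff
      have hcomp : HasDerivAt (fun y : ℂ => g ((t:ℂ) * y)) (deriv g ((t:ℂ) * x) * (t:ℂ)) x :=
        hdiff'.hasDerivAt.comp x hinner
      have : HasDerivAt (fun y : ℂ => g (t • y)) (((t:ℝ):ℂ) * deriv g (t • x)) x := by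
        simp only [Complex.real_smul]
        simpa [mul_comm] using hcomp
      simpa using this.const_mul ((((1 - t) ^ β : ℝ)) : ℂ))
  obtain ⟨-, hI⟩ := hdd
  -- hI : HasDerivAt (fun x => ∫ t in 0..1, F x t) (∫ t, F' θ t) θ
  have hcpow : HasDerivAt (fun x : ℂ => x ^ (((β + 1 : ℝ)) : ℂ))
      ((((β + 1 : ℝ)) : ℂ) * θ ^ ((β : ℂ))) θ := by
    have := (Complex.hasStrictDerivAt_cpow_const (c := (((β + 1 : ℝ)) : ℂ)) hθs).hasDerivAt
    refine this.congr_deriv ?_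
    rw [show (((β + 1 : ℝ)) : ℂ) - 1 = (β:ℂ) by push_cast; ring]
  have hprod := ((hcpow.mul hI).const_mul ((Complex.Gamma (((β + 1 : ℝ)) : ℂ))⁻¹))
  have hPeq : Pfrac (β + 1) g = fun x => (Complex.Gamma (((β + 1 : ℝ)) : ℂ))⁻¹
      * (x ^ (((β + 1 : ℝ)) : ℂ) * ∫ t in (0:ℝ)..1, (((1 - t) ^ β : ℝ) : ℂ) * g (t • x)) := by
    funext x
    rw [Pfrac]
    norm_num [mul_assoc]
  rw [hPeq]
  refine hprod.congr_deriv ?_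
  symm
  beta_reduce
  -- identify the value
  have hkey := keyC hU hstar hg hβ hθ
  have hΓcast : ((β + 1 : ℝ) : ℂ) = (β:ℂ) + 1 := by push_cast; ring
  have hΓ : Complex.Gamma (((β + 1 : ℝ)) : ℂ) = (β:ℂ) * Complex.Gamma (β:ℂ) := by
    rw [hΓcast]; exact Complex.Gamma_add_one _ hβC
  have hpow : θ ^ (((β + 1 : ℝ)) : ℂ) = θ ^ ((β:ℂ)) * θ := by
    rw [hΓcast, Complex.cpow_add _ _ hθ0, Complex.cpow_one]
  have hmid : (∫ t in (0:ℝ)..1, (((1 - t) ^ β : ℝ) : ℂ) * (((t:ℝ):ℂ) * deriv g (t • θ)))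
      = ∫ t in (0:ℝ)..1, ((t:ℝ):ℂ) * (((1 - t) ^ β : ℝ) : ℂ) * deriv g (t • θ) := by
    apply intervalIntegral.integral_congr; intro t _; ring
  rw [Pfrac, hΓ, hpow, hmid]
  set A := ∫ t in (0:ℝ)..1, (((1 - t) ^ (β - 1) : ℝ) : ℂ) * g (t • θ) with hA
  set B := ∫ t in (0:ℝ)..1, (((1 - t) ^ β : ℝ) : ℂ) * g (t • θ) with hB
  set L := ∫ t in (0:ℝ)..1, ((t:ℝ):ℂ) * (((1 - t) ^ β : ℝ) : ℂ) * deriv g (t • θ) with hL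
  -- hkey : θ * L = β * A - (β+1) * B
  -- goal : Γ(β)⁻¹ * θ^β * A = (β Γ(β))⁻¹ * ((β+1) θ^β * B + θ^β * θ * L)
  linear_combination (norm := (push_cast; ring1))
    (-(β:ℂ)⁻¹ * (Complex.Gamma ((β:ℂ)))⁻¹ * θ ^ ((β:ℂ))) * hkey
      - (Complex.Gamma ((β:ℂ)))⁻¹ * θ ^ ((β:ℂ)) * A * inv_mul_cancel₀ hβC

lemma gamma_prod {x : ℝ} (hx : 0 < x) (n : ℕ) :
    (∏ j ∈ Finset.range n, ((x:ℂ) - j)) * (Complex.Gamma ((x:ℂ) + 1))⁻¹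
      = (Complex.Gamma ((x:ℂ) - n + 1))⁻¹ := by
  induction n with
  | zero => simp
  | succ n ih =>
    rw [Finset.prod_range_succ]
    have hgoal : ((x:ℂ) - (n+1:ℕ) + 1) = (x:ℂ) - n := by push_cast; ring
    rw [hgoal]
    by_cases h : (x:ℂ) - n = 0
    · rw [h, Complex.Gamma_zero, inv_zero, mul_zero, zero_mul]
    · have hΓ : Complex.Gamma ((x:ℂ) - n + 1) = ((x:ℂ) - n) * Complex.Gamma ((x:ℂ) - n) :=
        Complex.Gamma_add_one _ h
      calc (∏ j ∈ Finset.range n, ((x:ℂ) - j)) * ((x:ℂ) - n) * (Complex.Gamma ((x:ℂ) + 1))⁻¹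
          = ((x:ℂ) - n) * ((∏ j ∈ Finset.range n, ((x:ℂ) - j))
              * (Complex.Gamma ((x:ℂ) + 1))⁻¹) := by ring
        _ = ((x:ℂ) - n) * (Complex.Gamma ((x:ℂ) - n + 1))⁻¹ := by rw [ih]
        _ = ((x:ℂ) - n) * (((x:ℂ) - n) * Complex.Gamma ((x:ℂ) - n))⁻¹ := by rw [hΓ]
        _ = ((x:ℂ) - n) * (((x:ℂ) - n)⁻¹ * (Complex.Gamma ((x:ℂ) - n))⁻¹) := by rw [mul_inv]
        _ = (Complex.Gamma ((x:ℂ) - n))⁻¹ := by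
            rw [← mul_assoc, mul_inv_cancel₀ h, one_mul]

lemma stepdown_iter {U : Set ℂ} (hU : IsOpen U) (hstar : StarConvex ℝ 0 U) {f : ℂ → ℂ}
    (hf : DifferentiableOn ℂ f U) {α : ℝ} (hα : 0 < α) (k : ℕ) {θ : ℂ} (hθ : θ ∈ U) :
    Pfrac α f θ = (∑ p ∈ Finset.range k,
        iteratedDeriv p f 0 * θ ^ ((α:ℂ) + p) / Complex.Gamma ((α:ℂ) + p + 1))
      + Pfrac (α + k) (iteratedDeriv k f) θ := by
  induction k with
  | zero => simp
  | succ k ih =>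
    rw [ih, Finset.sum_range_succ]
    have hd : DifferentiableOn ℂ (iteratedDeriv k f) U := iter_derivOn hU hf k
    have hstep := stepdown hU hstar hd (by positivity : (0:ℝ) < α + k) hθ
    rw [hstep]
    have h1 : ((α + (k:ℝ) : ℝ) : ℂ) = (α:ℂ) + k := by push_cast; ring
    have h2 : α + (k:ℝ) + 1 = α + ((k+1:ℕ) : ℝ) := by push_cast; ring
    have h3 : ((α:ℂ) + k) + 1 = (α:ℂ) + k + 1 := by ring
    rw [h1, h2, ← iteratedDeriv_succ]
    ring

theorem stmt_9 (U : Set ℂ) (hU : IsOpen U) (hstar : StarConvex ℝ 0 U)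
    (h0 : (0:ℂ) ∈ U) (f : ℂ → ℂ) (hf : DifferentiableOn ℂ f U)
    (α : ℝ) (hα : 0 < α) (n : ℕ) (hn : 0 < n) :
    ∀ θ ∈ U, (0 < θ.re ∨ θ.im ≠ 0) →
      iteratedDeriv n (Pfrac α f) θ - Pfrac α (iteratedDeriv n f) θ
        = ∑ p ∈ Finset.range n,
            iteratedDeriv p f 0 * θ ^ ((α : ℂ) - (n : ℂ) + (p : ℂ)) /
              Complex.Gamma ((α : ℂ) - (n : ℂ) + (p : ℂ) + 1) := by
  intro θ hθU hθs'
  have hθs : θ ∈ Complex.slitPlane := hθs'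
  set V : Set ℂ := U ∩ Complex.slitPlane with hVdef
  have hV : IsOpen V := hU.inter Complex.isOpen_slitPlane
  have hg : DifferentiableOn ℂ (iteratedDeriv n f) U := iter_derivOn hU hf n
  have main : ∀ k, k ≤ n → ∀ z ∈ V, iteratedDeriv k (Pfrac α f) z
      = (∑ p ∈ Finset.range n, iteratedDeriv p f 0 / Complex.Gamma ((α:ℂ) + p + 1)
          * ((∏ j ∈ Finset.range k, ((α:ℂ) + p - j)) * z ^ ((α:ℂ) + p - k)))
        + Pfrac (α + n - k) (iteratedDeriv n f) z := by
    intro k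
    induction k with
    | zero =>
      intro _ z hz
      rw [iteratedDeriv_zero, stepdown_iter hU hstar hf hα n hz.1]
      simp only [Nat.cast_zero, sub_zero, Finset.prod_range_zero, one_mul]
      congr 1
      apply Finset.sum_congr rfl
      intro p _
      ring
    | succ k ih =>
      intro hk z hz
      have hk' : k ≤ n := le_trans (Nat.le_succ k) hk
      have heq : iteratedDeriv k (Pfrac α f) =ᶠ[𝓝 z]
          (fun w => (∑ p ∈ Finset.range n, iteratedDeriv p f 0 / Complex.Gamma ((α:ℂ) + p + 1)
              * ((∏ j ∈ Finset.range k, ((α:ℂ) + p - j)) * w ^ ((α:ℂ) + p - k)))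
            + Pfrac (α + n - k) (iteratedDeriv n f) w) := by
        filter_upwards [hV.mem_nhds hz] with w hw using ih hk' w hw
      rw [iteratedDeriv_succ, heq.deriv_eq]
      have hβ : (0:ℝ) < α + n - (k+1) := by
        have hkn : ((k:ℝ) + 1) ≤ (n:ℝ) := by exact_mod_cast hk
        linarith
      have hPder : HasDerivAt (fun w => Pfrac (α + n - k) (iteratedDeriv n f) w)
          (Pfrac (α + n - (k+1:ℕ)) (iteratedDeriv n f) z) z := by
        have h1 := hasDerivAt_Pfrac hU hstar hg hβ hz.1 hz.2
        have harg : α + (n:ℝ) - ((k+1:ℕ):ℝ) = α + (n:ℝ) - ((k:ℝ)+1) := by push_cast; ring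
        have harg2 : α + (n:ℝ) - ((k:ℝ)+1) + 1 = α + (n:ℝ) - (k:ℝ) := by ring
        rw [harg2] at h1
        rw [harg]
        exact h1
      have hsum : HasDerivAt
          (fun w => (∑ p ∈ Finset.range n, iteratedDeriv p f 0 / Complex.Gamma ((α:ℂ) + p + 1)
            * ((∏ j ∈ Finset.range k, ((α:ℂ) + p - j)) * w ^ ((α:ℂ) + p - k))))
          (∑ p ∈ Finset.range n, iteratedDeriv p f 0 / Complex.Gamma ((α:ℂ) + p + 1)
            * ((∏ j ∈ Finset.range k, ((α:ℂ) + p - j))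
              * (((α:ℂ) + p - k) * z ^ ((α:ℂ) + p - k - 1)))) z := by
        apply HasDerivAt.fun_sum
        intro p _
        exact (((Complex.hasStrictDerivAt_cpow_const (c := (α:ℂ) + p - k)
          hz.2).hasDerivAt.const_mul _).const_mul _)
      rw [(hsum.fun_add hPder).deriv]
      congr 1
      apply Finset.sum_congr rfl
      intro p _
      rw [Finset.prod_range_succ]
      rw [show ((α:ℂ) + p - ((k+1:ℕ):ℂ)) = ((α:ℂ) + p - k) - 1 by push_cast; ring]
      ring
  have hfin := main n le_rfl θ ⟨hθU, hθs⟩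
  rw [show α + (n:ℝ) - (n:ℝ) = α from by ring] at hfin
  rw [hfin, add_sub_cancel_right]
  apply Finset.sum_congr rfl
  intro p _
  have hgp := gamma_prod (x := α + p) (by positivity) n
  push_cast at hgp
  rw [show ((α:ℂ) - (n:ℂ) + (p:ℂ)) = ((α:ℂ) + p - n) by ring,
    show ((α:ℂ) + (p:ℂ) - (n:ℂ) + 1) = ((α:ℂ) + p - n + 1) by ring]
  linear_combination (iteratedDeriv p f 0 * θ ^ ((α:ℂ) + p - n)) * hgp
end
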